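/- For natural numbers n and k with 0 ≤ k ≤ n-1, the sum over σ in S_n of sign(σ)·(fix(σ))_k·2^(fix(σ)-k) equals n!·(n-k+1)/(n-k)!, where (fix(σ))_k denotes the falling factorial fix(σ)(fix(σ)-1)···(fix(σ)-k+1). -/

import Mathlib

open Finset Equiv Equiv.Perm

/-- Sum of signs over all permutations of a finite type. -/
lemma mySum_sign (β : Type*) [Fintype β] [DecidableEq β] :
    ∑ τ : Equiv.Perm β, ((Equiv.Perm.sign τ : ℤ)) =
      if Fintype.card β ≤ 1 then 1 else 0 := by
  by_cases h : Fintype.card β ≤ 1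
  · rw [if_pos h]
    haveI : Subsingleton β := Fintype.card_le_one_iff_subsingleton.mp h
    have hτ : ∀ τ : Equiv.Perm β, (Equiv.Perm.sign τ : ℤ) = 1 := by
      intro τ
      have : τ = 1 := Subsingleton.elim _ _
      simp [this]
    rw [Finset.sum_congr rfl (fun τ _ => hτ τ), Finset.sum_const, Finset.card_univ,
      Fintype.card_perm]
    interval_cases h' : Fintype.card β <;> simp
  · rw [if_neg h]
    push_neg at h
    obtain ⟨x, y, hxy⟩ := Fintype.exists_pair_of_one_lt_card h
    have key : ∑ τ : Equiv.Perm β, ((Equiv.Perm.sign τ : ℤ)) =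
        ∑ τ : Equiv.Perm β, ((Equiv.Perm.sign (Equiv.swap x y * τ) : ℤ)) := by
      exact (Fintype.sum_equiv (Equiv.mulLeft (Equiv.swap x y)) _ _ (fun τ => rfl)).symm
    have key2 : ∀ τ : Equiv.Perm β,
        ((Equiv.Perm.sign (Equiv.swap x y * τ) : ℤ)) = -((Equiv.Perm.sign τ : ℤ)) := by
      intro τ
      simp [Equiv.Perm.sign_swap hxy]
    rw [Finset.sum_congr rfl (fun τ _ => key2 τ), Finset.sum_neg_distrib] at key
    omega

/-- Sum of signs over permutations fixing a given finset pointwise. -/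
lemma mySum_sign_fixing (n : ℕ) (A : Finset (Fin n)) :
    ∑ σ : Equiv.Perm (Fin n), (if ∀ a ∈ A, σ a = a then ((Equiv.Perm.sign σ : ℤ)) else 0)
      = if n - 1 ≤ A.card then 1 else 0 := by
  classical
  have hcard : Fintype.card {x : Fin n // x ∉ A} = n - A.card := by
    simp [Fintype.card_subtype_compl, Fintype.card_fin]
  rw [← Finset.sum_filter]
  rw [show (if n - 1 ≤ A.card then (1:ℤ) else 0)
      = if Fintype.card {x : Fin n // x ∉ A} ≤ 1 then 1 else 0 by
    rw [hcard]
    congr 1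
    simp only [eq_iff_iff]
    have := A.card_le_univ
    simp only [Finset.card_univ, Fintype.card_fin] at this
    omega]
  rw [← mySum_sign {x : Fin n // x ∉ A}]
  refine (Finset.sum_bij (fun (τ : Equiv.Perm {x : Fin n // x ∉ A}) _ =>
      Equiv.Perm.ofSubtype τ) ?_ ?_ ?_ ?_).symm
  · intro τ _
    rw [Finset.mem_filter]
    refine ⟨Finset.mem_univ _, fun a ha => ?_⟩
    exact Equiv.Perm.ofSubtype_apply_of_not_mem τ (by simp [ha])
  · intro f _ g _ hfg
    refine Equiv.ext fun x => ?_
    have := congrArg (fun (σ : Equiv.Perm (Fin n)) => σ (x : Fin n)) hfg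
    simp only [Equiv.Perm.ofSubtype_apply_coe] at this
    exact Subtype.ext this
  · intro σ hσ
    rw [Finset.mem_filter] at hσ
    have hfix : ∀ a ∈ A, σ a = a := hσ.2
    have hmem : ∀ x : Fin n, (x ∉ A) ↔ (σ x ∉ A) := by
      intro x
      constructor
      · intro hx hσx
        have : σ (σ x) = σ x := hfix _ hσx
        exact hx (by rwa [σ.injective this] at hσx)
      · intro hσx hx
        exact hσx (by rw [hfix x hx]; exact hx)
    refine ⟨σ.subtypePerm (fun x => (hmem x).symm), Finset.mem_univ _, ?_⟩
    exact Equiv.Perm.ofSubtype_subtypePerm (fun x => (hmem x).symm)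
      (fun x hx => by intro hxA; exact hx (hfix x hxA))
  · intro τ _
    rw [Equiv.Perm.sign_ofSubtype]

/-- Binomial identity: sum over subset sizes. -/
lemma myChoose_descFactorial (m k : ℕ) :
    ∑ j ∈ Finset.range (m + 1), m.choose j * j.descFactorial k
      = m.descFactorial k * 2 ^ (m - k) := by
  rcases le_or_gt k m with h | h
  · have hsplit : m + 1 = k + (m - k + 1) := by omega
    have hdisj : _root_.Disjoint (Finset.range k)
        ((Finset.range (m - k + 1)).map (addLeftEmbedding k)) := by
      rw [Finset.disjoint_left]
      intro j hj hj2
      rw [Finset.mem_range] at hj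
      rw [Finset.mem_map] at hj2
      obtain ⟨i, _, hi⟩ := hj2
      have : addLeftEmbedding k i = k + i := rfl
      omega
    rw [hsplit, Finset.range_add, Finset.sum_union hdisj, Finset.sum_map]
    have h1 : ∑ j ∈ Finset.range k, m.choose j * j.descFactorial k = 0 := by
      refine Finset.sum_eq_zero fun j hj => ?_
      rw [Finset.mem_range] at hj
      rw [Nat.descFactorial_eq_zero_iff_lt.mpr hj, Nat.mul_zero]
    have h2 : ∀ i ∈ Finset.range (m - k + 1),
        m.choose (addLeftEmbedding k i) * (addLeftEmbedding k i).descFactorial k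
          = m.descFactorial k * (m - k).choose i := by
      intro i hi
      rw [Finset.mem_range] at hi
      have hik : k + i ≤ m := by omega
      have hemb : addLeftEmbedding k i = k + i := rfl
      rw [hemb, Nat.descFactorial_eq_factorial_mul_choose,
        Nat.descFactorial_eq_factorial_mul_choose]
      have hc := Nat.choose_mul (n := m) (Nat.le_add_right k i)
      rw [Nat.add_sub_cancel_left] at hc
      calc m.choose (k + i) * (Nat.factorial k * (k + i).choose k)
          = Nat.factorial k * (m.choose (k + i) * (k + i).choose k) := by ring
        _ = Nat.factorial k * (m.choose k * (m - k).choose i) := by rw [hc]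
        _ = Nat.factorial k * m.choose k * (m - k).choose i := by ring
    rw [h1, Finset.sum_congr rfl h2, ← Finset.mul_sum, Nat.sum_range_choose]
    exact Nat.zero_add _
  · rw [Nat.descFactorial_eq_zero_iff_lt.mpr h, Nat.zero_mul]
    refine Finset.sum_eq_zero fun j hj => ?_
    rw [Finset.mem_range] at hj
    rw [Nat.descFactorial_eq_zero_iff_lt.mpr (by omega), Nat.mul_zero]

/-- Powerset sum of descending factorials. -/
lemma myPowerset_descFactorial {α : Type*} [DecidableEq α] (F : Finset α) (k : ℕ) :
    ∑ A ∈ F.powerset, (A.card).descFactorial k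
      = (F.card).descFactorial k * 2 ^ (F.card - k) := by
  rw [Finset.sum_powerset_apply_card (fun j => j.descFactorial k)]
  simp only [smul_eq_mul]
  exact myChoose_descFactorial F.card k

theorem deriv_at_two (n k : ℕ) (hn : 1 ≤ n) (hk : k ≤ n - 1) :
    (∑ σ : Equiv.Perm (Fin n),
      ((Equiv.Perm.sign σ : ℤ) : ℝ) *
        (Nat.descFactorial (Finset.univ.filter fun i => σ i = i).card k : ℝ) *
        (2:ℝ) ^ ((Finset.univ.filter fun i => σ i = i).card - k))
      = (n.factorial : ℝ) * ((n : ℝ) - k + 1) / ((n - k).factorial : ℝ) := by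
  classical
  have hkn : k ≤ n := by omega
  have hk' : k + 1 ≤ n := by omega
  set Fix : Equiv.Perm (Fin n) → Finset (Fin n) :=
    fun σ => Finset.univ.filter fun i => σ i = i with hFix
  -- the integer-valued computation
  have main : (∑ σ : Equiv.Perm (Fin n), ((Equiv.Perm.sign σ : ℤ)) *
      (((Fix σ).card.descFactorial k * 2 ^ ((Fix σ).card - k) : ℕ) : ℤ))
      = ((n.descFactorial k + n.descFactorial (k + 1) : ℕ) : ℤ) := by
    have step1 : ∀ σ : Equiv.Perm (Fin n),
        ((Equiv.Perm.sign σ : ℤ)) *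
          (((Fix σ).card.descFactorial k * 2 ^ ((Fix σ).card - k) : ℕ) : ℤ)
        = ∑ A ∈ (Fix σ).powerset,
            ((Equiv.Perm.sign σ : ℤ)) * ((A.card.descFactorial k : ℕ) : ℤ) := by
      intro σ
      rw [← myPowerset_descFactorial (Fix σ) k, Nat.cast_sum, Finset.mul_sum]
    rw [Finset.sum_congr rfl fun σ _ => step1 σ]
    have step2 : ∀ σ : Equiv.Perm (Fin n),
        (∑ A ∈ (Fix σ).powerset,
          ((Equiv.Perm.sign σ : ℤ)) * ((A.card.descFactorial k : ℕ) : ℤ))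
        = ∑ A : Finset (Fin n), (if ∀ a ∈ A, σ a = a then
            ((Equiv.Perm.sign σ : ℤ)) * ((A.card.descFactorial k : ℕ) : ℤ) else 0) := by
      intro σ
      have hps : (Finset.univ.filter (fun A : Finset (Fin n) => ∀ a ∈ A, σ a = a))
          = (Fix σ).powerset := by
        ext A
        simp [hFix, Finset.mem_powerset, Finset.subset_iff]
      rw [← hps, Finset.sum_filter]
    rw [Finset.sum_congr rfl fun σ _ => step2 σ, Finset.sum_comm]
    have step3 : ∀ A : Finset (Fin n),
        (∑ σ : Equiv.Perm (Fin n), (if ∀ a ∈ A, σ a = a then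
            ((Equiv.Perm.sign σ : ℤ)) * ((A.card.descFactorial k : ℕ) : ℤ) else 0))
        = ((if n - 1 ≤ A.card then A.card.descFactorial k else 0 : ℕ) : ℤ) := by
      intro A
      have : (∑ σ : Equiv.Perm (Fin n), (if ∀ a ∈ A, σ a = a then
            ((Equiv.Perm.sign σ : ℤ)) * ((A.card.descFactorial k : ℕ) : ℤ) else 0))
          = (∑ σ : Equiv.Perm (Fin n), (if ∀ a ∈ A, σ a = a then
            ((Equiv.Perm.sign σ : ℤ)) else 0)) * ((A.card.descFactorial k : ℕ) : ℤ) := by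
        rw [Finset.sum_mul]
        refine Finset.sum_congr rfl fun σ _ => ?_
        by_cases h : ∀ a ∈ A, σ a = a <;> simp [h]
      rw [this, mySum_sign_fixing n A]
      by_cases h : n - 1 ≤ A.card <;> simp [h]
    rw [Finset.sum_congr rfl fun A _ => step3 A, ← Nat.cast_sum]
    congr 1
    obtain ⟨m, rfl⟩ : ∃ m, n = m + 1 := ⟨n - 1, by omega⟩
    rw [← Finset.powerset_univ,
      Finset.sum_powerset_apply_card (fun j => if m + 1 - 1 ≤ j then j.descFactorial k else 0),
      Finset.card_univ, Fintype.card_fin, Finset.sum_range_succ, Finset.sum_range_succ]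
    have hz : ∑ j ∈ Finset.range m,
        (m + 1).choose j • (if m + 1 - 1 ≤ j then j.descFactorial k else 0) = 0 := by
      refine Finset.sum_eq_zero fun j hj => ?_
      rw [Finset.mem_range] at hj
      rw [if_neg (by omega)]
      simp
    rw [hz, Nat.zero_add, if_pos (by omega), if_pos (by omega), smul_eq_mul, smul_eq_mul,
      Nat.choose_succ_self_right, Nat.choose_self, Nat.one_mul,
      Nat.succ_descFactorial_succ]
    omega
  -- transfer to the reals
  have cast1 : (∑ σ : Equiv.Perm (Fin n),
      ((Equiv.Perm.sign σ : ℤ) : ℝ) *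
        (Nat.descFactorial (Finset.univ.filter fun i => σ i = i).card k : ℝ) *
        (2:ℝ) ^ ((Finset.univ.filter fun i => σ i = i).card - k))
      = ((n.descFactorial k + n.descFactorial (k + 1) : ℕ) : ℝ) := by
    rw [show ((n.descFactorial k + n.descFactorial (k + 1) : ℕ) : ℝ)
        = (((n.descFactorial k + n.descFactorial (k + 1) : ℕ) : ℤ) : ℝ) by push_cast; ring]
    rw [← main]
    push_cast
    refine Finset.sum_congr rfl fun σ _ => ?_
    ring
  rw [cast1]
  -- final arithmetic
  have hfact : ((n - k).factorial : ℝ) ≠ 0 := by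
    exact_mod_cast (n - k).factorial_ne_zero
  rw [eq_div_iff hfact]
  have hsub : (n : ℝ) - k = ((n - k : ℕ) : ℝ) := by
    rw [Nat.cast_sub hkn]
  rw [hsub]
  have h1 : ((n - k).factorial * n.descFactorial k : ℕ) = (n.factorial : ℕ) :=
    Nat.factorial_mul_descFactorial hkn
  have h2 : ((n - k).factorial * n.descFactorial (k + 1) : ℕ)
      = ((n - k) * n.factorial : ℕ) := by
    rw [show n - k = (n - (k + 1)) + 1 by omega, Nat.factorial_succ, mul_assoc,
      Nat.factorial_mul_descFactorial hk']
  have H1 : ((n - k).factorial : ℝ) * (n.descFactorial k : ℝ) = (n.factorial : ℝ) := by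
    exact_mod_cast congrArg (Nat.cast : ℕ → ℝ) h1
  have H2 : ((n - k).factorial : ℝ) * (n.descFactorial (k + 1) : ℝ)
      = ((n - k : ℕ) : ℝ) * (n.factorial : ℝ) := by
    exact_mod_cast congrArg (Nat.cast : ℕ → ℝ) h2
  push_cast
  linear_combination H1 + H2
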